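/- arXiv:1804.10950 — 7 statements merged into one kernel-verified Lean document; each statement's English description precedes it below -/
import Mathlib

section
/- Let μ ∈ ℝ, σ > 0, β > 0, n ≥ 1 and let x₁, …, xₙ > 0. Then the density power divergence objective function satisfies ∫₀^∞ f_{μ,σ}(x)^{1+β} dx − (1 + 1/β) · (1/n) ∑_{i=1}^n f_{μ,σ}(x_i)^β = (1+β) · h, where h = (1/(σ^β (2π)^{β/2})) · [ exp(−βμ + σ²β²/(2(1+β))) / (1+β)^{3/2} − (1/(nβ)) ∑_{i=1}^n x_i^{−β} exp(−β(log x_i − μ)²/(2σ²)) ]. -/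
open Real MeasureTheory Set Finset

/-- The log-normal density with parameters `μ` and `σ`. -/
noncomputable def lognormalPdf (μ σ : ℝ) (x : ℝ) : ℝ :=
  if 0 < x then
    (1 / (x * σ * Real.sqrt (2 * Real.pi))) * Real.exp (-(Real.log x - μ) ^ 2 / (2 * σ ^ 2))
  else 0

lemma lognormal_rpow (μ σ : ℝ) (hσ : 0 < σ) (p : ℝ) {t : ℝ} (ht : 0 < t) :
    lognormalPdf μ σ t ^ p =
      t ^ (-p) * (σ ^ p * (2 * Real.pi) ^ (p / 2))⁻¹ *
        Real.exp (-p * (Real.log t - μ) ^ 2 / (2 * σ ^ 2)) := by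
  have h2π : (0:ℝ) < 2 * Real.pi := by positivity
  have h1 : (Real.sqrt (2*Real.pi))⁻¹ ^ p = ((2*Real.pi) ^ (p/2))⁻¹ := by
    rw [Real.inv_rpow (Real.sqrt_nonneg _), Real.sqrt_eq_rpow, ← Real.rpow_mul h2π.le]
    ring_nf
  rw [lognormalPdf, if_pos ht, one_div, mul_inv, mul_inv,
    Real.mul_rpow (by positivity) (Real.exp_nonneg _),
    Real.mul_rpow (by positivity) (by positivity),
    Real.mul_rpow (by positivity) (by positivity),
    Real.inv_rpow ht.le, Real.inv_rpow hσ.le, ← Real.rpow_neg ht.le, h1, ← Real.exp_mul,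
    mul_inv]
  ring_nf

lemma integral_lognormal_rpow (μ σ β : ℝ) (hσ : 0 < σ) (hβ : 0 < β) :
    ∫ t in Ioi (0:ℝ), lognormalPdf μ σ t ^ (1 + β) =
      Real.exp (-β * μ + σ ^ 2 * β ^ 2 / (2 * (1 + β))) /
        (σ ^ β * (2 * Real.pi) ^ (β / 2) * Real.sqrt (1 + β)) := by
  have h2π : (0:ℝ) < 2 * Real.pi := by positivity
  have hβ1 : (0:ℝ) < 1 + β := by linarith
  set a : ℝ := (1 + β) / (2 * σ ^ 2) with ha
  have haz : 0 < a := by positivity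
  set c : ℝ := μ - β * σ ^ 2 / (1 + β) with hc
  set d : ℝ := -β * μ + σ ^ 2 * β ^ 2 / (2 * (1 + β)) with hd
  set K : ℝ := σ ^ (1+β) * (2 * Real.pi) ^ ((1+β) / 2) with hK
  have hKpos : 0 < K := by positivity
  -- substitution x = exp y
  have hsub : ∫ t in Ioi (0:ℝ), lognormalPdf μ σ t ^ (1 + β)
      = ∫ y : ℝ, |Real.exp y| • (lognormalPdf μ σ (Real.exp y) ^ (1 + β)) := by
    rw [← Real.range_exp, ← Set.image_univ,
      integral_image_eq_integral_abs_deriv_smul MeasurableSet.univ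
        (fun x _ => (Real.hasDerivAt_exp x).hasDerivWithinAt)
        (Real.exp_injective.injOn) (fun t => lognormalPdf μ σ t ^ (1 + β)),
      Measure.restrict_univ]
  have hpt : ∀ y : ℝ, |Real.exp y| • (lognormalPdf μ σ (Real.exp y) ^ (1 + β))
      = (K⁻¹ * Real.exp d) * Real.exp (-a * (y - c) ^ 2) := by
    intro y
    rw [smul_eq_mul, abs_of_pos (Real.exp_pos y),
      lognormal_rpow μ σ hσ (1+β) (Real.exp_pos y), Real.log_exp, ← Real.exp_mul, ← hK,
      show Real.exp y * (Real.exp (y * -(1+β)) * K⁻¹ *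
          Real.exp (-(1+β) * (y - μ) ^ 2 / (2 * σ ^ 2)))
        = K⁻¹ * Real.exp (y + y * -(1+β) + -(1+β) * (y - μ) ^ 2 / (2 * σ ^ 2)) by
        rw [Real.exp_add, Real.exp_add]; ring,
      mul_assoc, ← Real.exp_add]
    congr 1
    rw [ha, hc, hd]
    rw [Real.exp_eq_exp]
    field_simp
    ring
  rw [hsub]
  simp_rw [hpt]
  rw [MeasureTheory.integral_const_mul]
  have hgauss : ∫ y : ℝ, Real.exp (-a * (y - c) ^ 2) = Real.sqrt (Real.pi / a) := by
    rw [← integral_gaussian a]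
    exact MeasureTheory.integral_sub_right_eq_self (fun y => Real.exp (-a * y ^ 2)) c
  rw [hgauss]
  -- constants
  have hsq : Real.sqrt (Real.pi / a) = σ * Real.sqrt (2 * Real.pi) / Real.sqrt (1 + β) := by
    rw [ha, show Real.pi / ((1 + β) / (2 * σ ^ 2)) = (σ ^ 2 * (2 * Real.pi)) / (1 + β) by
      field_simp, Real.sqrt_div (by positivity), Real.sqrt_mul (sq_nonneg σ),
      Real.sqrt_sq hσ.le]
  have hKsplit : K = (σ ^ β * (2 * Real.pi) ^ (β / 2)) * (σ * Real.sqrt (2 * Real.pi)) := by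
    rw [hK, show (1+β)/2 = 1/2 + β/2 by ring, Real.rpow_add hσ, Real.rpow_add h2π,
      Real.rpow_one, ← Real.sqrt_eq_rpow]
    ring
  rw [hsq, hKsplit]
  have hs2π : 0 < Real.sqrt (2 * Real.pi) := Real.sqrt_pos.mpr h2π
  have hsβ : 0 < Real.sqrt (1 + β) := Real.sqrt_pos.mpr hβ1
  have hσβ : (0:ℝ) < σ ^ β * (2 * Real.pi) ^ (β / 2) := by positivity
  field_simp

/-- For a log-normal density, the density power divergence objective function equals
`(1+β) · h_{n,β}(μ,σ)`. -/
theorem dpd_objective_eq (μ σ β : ℝ) (hσ : 0 < σ) (hβ : 0 < β)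
    (n : ℕ) (hn : 1 ≤ n) (x : Fin n → ℝ) (hx : ∀ i, 0 < x i) :
    (∫ t in Ioi (0 : ℝ), lognormalPdf μ σ t ^ (1 + β)) -
        (1 + 1 / β) * ((1 : ℝ) / n) * ∑ i, lognormalPdf μ σ (x i) ^ β =
      (1 + β) *
        ((1 / (σ ^ β * (2 * Real.pi) ^ (β / 2))) *
          (Real.exp (-β * μ + σ ^ 2 * β ^ 2 / (2 * (1 + β))) / (1 + β) ^ ((3 : ℝ) / 2) -
            (1 / (n * β)) *
              ∑ i, (x i) ^ (-β) *
                Real.exp (-β * (Real.log (x i) - μ) ^ 2 / (2 * σ ^ 2)))) := by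
  have h2π : (0:ℝ) < 2 * Real.pi := by positivity
  have hβ1 : (0:ℝ) < 1 + β := by linarith
  have hK : (0:ℝ) < σ ^ β * (2 * Real.pi) ^ (β / 2) := by positivity
  have hnn : (0:ℝ) < (n:ℝ) := by exact_mod_cast Nat.lt_of_lt_of_le Nat.zero_lt_one hn
  rw [integral_lognormal_rpow μ σ β hσ hβ]
  have hsum : ∑ i, lognormalPdf μ σ (x i) ^ β
      = (σ ^ β * (2 * Real.pi) ^ (β / 2))⁻¹ *
          ∑ i, (x i) ^ (-β) * Real.exp (-β * (Real.log (x i) - μ) ^ 2 / (2 * σ ^ 2)) := by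
    rw [Finset.mul_sum]
    refine Finset.sum_congr rfl fun i _ => ?_
    rw [lognormal_rpow μ σ hσ β (hx i)]
    ring
  rw [hsum, show ((3:ℝ)/2) = 1 + 1/2 by ring, Real.rpow_add hβ1, Real.rpow_one,
    ← Real.sqrt_eq_rpow]
  have hsβ : 0 < Real.sqrt (1 + β) := Real.sqrt_pos.mpr hβ1
  field_simp
  ring
end

section
/- Let μ ∈ ℝ, σ > 0 and β ≥ 0. Then ∫₀^∞ u₁(x) · f_{μ,σ}(x)^{1+β} dx = −βσ(1+β) · L(β,μ,σ). -/
open Real MeasureTheory Set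

/-- First component of the score function of the log-normal model. -/
noncomputable def scoreU1 (μ σ : ℝ) (x : ℝ) : ℝ := (Real.log x - μ) / σ ^ 2

/-- Second component of the score function of the log-normal model. -/
noncomputable def scoreU2 (μ σ : ℝ) (x : ℝ) : ℝ := ((Real.log x - μ) ^ 2 - σ ^ 2) / σ ^ 3

/-- The common multiplicative factor `L(β, μ, σ)`. -/
noncomputable def Lfactor (β μ σ : ℝ) : ℝ :=
  Real.exp (-β * μ + β ^ 2 * σ ^ 2 / (2 * (1 + β))) /
    (σ ^ (1 + β) * (2 * Real.pi) ^ (β / 2) * (1 + β) ^ ((5 : ℝ) / 2))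

lemma gauss_odd (a : ℝ) : ∫ y : ℝ, y * Real.exp (-a * y ^ 2) = 0 := by
  have h := MeasureTheory.integral_neg_eq_self (fun y : ℝ ↦ y * Real.exp (-a * y ^ 2)) volume
  simp only [neg_sq, neg_mul] at h
  rw [integral_neg] at h
  simp only [neg_mul]
  linarith

lemma gauss_first (a b : ℝ) (ha : 0 < a) :
    ∫ y : ℝ, y * Real.exp (-a * y ^ 2 + b * y)
      = b / (2 * a) * Real.sqrt (π / a) * Real.exp (b ^ 2 / (4 * a)) := by
  have ha' : a ≠ 0 := ha.ne'
  set m := b / (2 * a) with hm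
  have hkey : ∀ y : ℝ, -a * y ^ 2 + b * y = -a * (y - m) ^ 2 + b ^ 2 / (4 * a) := by
    intro y; rw [hm]; field_simp; ring
  calc ∫ y : ℝ, y * Real.exp (-a * y ^ 2 + b * y)
      = ∫ y : ℝ, (y * Real.exp (-a * (y - m) ^ 2)) * Real.exp (b ^ 2 / (4 * a)) := by
        congr 1; funext y; rw [hkey y, Real.exp_add]; ring
    _ = (∫ y : ℝ, y * Real.exp (-a * (y - m) ^ 2)) * Real.exp (b ^ 2 / (4 * a)) :=
        integral_mul_const _ _
    _ = (∫ y : ℝ, (y + m) * Real.exp (-a * y ^ 2)) * Real.exp (b ^ 2 / (4 * a)) := by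
        rw [← MeasureTheory.integral_add_right_eq_self
          (fun y : ℝ ↦ y * Real.exp (-a * (y - m) ^ 2)) m]
        simp
    _ = m * Real.sqrt (π / a) * Real.exp (b ^ 2 / (4 * a)) := by
        have h1 : Integrable (fun y : ℝ ↦ y * Real.exp (-a * y ^ 2)) :=
          integrable_mul_exp_neg_mul_sq ha
        have h2 : Integrable (fun y : ℝ ↦ m * Real.exp (-a * y ^ 2)) :=
          (integrable_exp_neg_mul_sq ha).const_mul m
        have h3 : (∫ y : ℝ, (y + m) * Real.exp (-a * y ^ 2))
            = (∫ y : ℝ, y * Real.exp (-a * y ^ 2)) + ∫ y : ℝ, m * Real.exp (-a * y ^ 2) := by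
          rw [← integral_add h1 h2]; congr 1; funext y; ring
        rw [h3, gauss_odd, zero_add, integral_const_mul, integral_gaussian]

lemma final_alg (σ β : ℝ) (hσ : 0 < σ) (hβ : 0 ≤ β) :
    1 / σ ^ 2 * (-β / (2 * ((1 + β) / (2 * σ ^ 2)))) *
      Real.sqrt (π / ((1 + β) / (2 * σ ^ 2))) * (σ * Real.sqrt (2 * π)) ^ (-(1 + β))
    = -β * σ * (1 + β) / (σ ^ (1 + β) * (2 * π) ^ (β / 2) * (1 + β) ^ ((5 : ℝ) / 2)) := by
  have h1β : (0 : ℝ) < 1 + β := by linarith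
  have hπ2 : (0 : ℝ) < 2 * π := by positivity
  set c : ℝ := Real.sqrt (2 * π) with hc
  have hcpos : 0 < c := Real.sqrt_pos.mpr hπ2
  have hs1 : Real.sqrt (π / ((1 + β) / (2 * σ ^ 2))) = c * σ / Real.sqrt (1 + β) := by
    rw [show π / ((1 + β) / (2 * σ ^ 2)) = (2 * π) * σ ^ 2 / (1 + β) by field_simp,
      Real.sqrt_div' _ , Real.sqrt_mul hπ2.le, Real.sqrt_sq hσ.le]
    exact h1β.le
  have h2 : (σ * c) ^ (-(1 + β)) = (σ * c)⁻¹ * (σ ^ (-β) * c ^ (-β)) := by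
    rw [show -(1 + β) = (-1) + (-β) by ring, Real.rpow_add (by positivity),
      Real.rpow_neg_one, Real.mul_rpow hσ.le hcpos.le]
  have h3 : σ ^ (1 + β) = σ * σ ^ β := by
    rw [Real.rpow_add hσ, Real.rpow_one]
  have h4 : (1 + β) ^ ((5 : ℝ) / 2) = (1 + β) ^ 2 * Real.sqrt (1 + β) := by
    rw [show (5 : ℝ) / 2 = (2 : ℕ) + (1 / 2 : ℝ) by norm_num, Real.rpow_add h1β,
      Real.rpow_natCast, ← Real.sqrt_eq_rpow]
  have h5 : (2 * π) ^ (β / 2) = c ^ β := by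
    rw [show β / 2 = (1 / 2 : ℝ) * β by ring, Real.rpow_mul hπ2.le, ← Real.sqrt_eq_rpow]
  rw [hs1, h2, h3, h4, h5]
  have hσβ : (0 : ℝ) < σ ^ β := Real.rpow_pos_of_pos hσ β
  have hcβ : (0 : ℝ) < c ^ β := Real.rpow_pos_of_pos hcpos β
  have hsq : (0 : ℝ) < Real.sqrt (1 + β) := Real.sqrt_pos.mpr h1β
  have hsq2 : Real.sqrt (1 + β) ^ 2 = 1 + β := Real.sq_sqrt h1β.le
  rw [Real.rpow_neg hσ.le, Real.rpow_neg hcpos.le]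
  field_simp

/-- First component of `ξ(μ,σ)`: the integral of `u₁ · f^{1+β}` over `(0,∞)`. -/
theorem xi_first_component (μ σ β : ℝ) (hσ : 0 < σ) (hβ : 0 ≤ β) :
    ∫ x in Ioi (0 : ℝ), scoreU1 μ σ x * lognormalPdf μ σ x ^ (1 + β) =
      -β * σ * (1 + β) * Lfactor β μ σ := by
  have hσ' : σ ≠ 0 := hσ.ne'
  have h1β : (0 : ℝ) < 1 + β := by linarith
  have hπ2 : (0 : ℝ) < 2 * π := by positivity
  have hσπ : (0 : ℝ) < σ * Real.sqrt (2 * π) := by positivity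
  set L : ℝ := Real.log (σ * Real.sqrt (2 * π)) with hL
  set a : ℝ := (1 + β) / (2 * σ ^ 2) with haa
  have ha : 0 < a := by positivity
  set b : ℝ := -β with hb
  set D : ℝ := -β * μ - (1 + β) * L with hD
  -- change of variables x = exp y
  have hchg := MeasureTheory.integral_image_eq_integral_abs_deriv_smul (MeasurableSet.univ)
    (fun x (_ : x ∈ univ) => (Real.hasDerivAt_exp x).hasDerivWithinAt)
    (Real.exp_injective.injOn)
    (fun x => scoreU1 μ σ x * lognormalPdf μ σ x ^ (1 + β))
  rw [image_univ, Real.range_exp, Measure.restrict_univ] at hchg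
  rw [hchg]
  -- pointwise rewriting
  have hpt : ∀ y : ℝ,
      |Real.exp y| • (scoreU1 μ σ (Real.exp y) * lognormalPdf μ σ (Real.exp y) ^ (1 + β))
      = (1 / σ ^ 2) * (((y - μ) * Real.exp (-a * (y - μ) ^ 2 + b * (y - μ))) * Real.exp D) := by
    intro y
    have hpdf : lognormalPdf μ σ (Real.exp y)
        = Real.exp (-y - L - (y - μ) ^ 2 / (2 * σ ^ 2)) := by
      rw [lognormalPdf, if_pos (Real.exp_pos y), Real.log_exp]
      rw [show -y - L - (y - μ) ^ 2 / (2 * σ ^ 2)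
          = (-y) + (-L) + (-(y - μ) ^ 2 / (2 * σ ^ 2)) by ring]
      rw [Real.exp_add, Real.exp_add, Real.exp_neg, Real.exp_neg, Real.exp_log hσπ]
      field_simp
    rw [hpdf, scoreU1, Real.log_exp, ← Real.exp_mul, smul_eq_mul,
      abs_of_pos (Real.exp_pos y), mul_assoc ((y : ℝ) - μ), ← Real.exp_add,
      show -a * (y - μ) ^ 2 + b * (y - μ) + D
        = y + (-y - L - (y - μ) ^ 2 / (2 * σ ^ 2)) * (1 + β) by
          rw [haa, hb, hD]; field_simp; ring,
      Real.exp_add]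
    ring
  simp_rw [hpt]
  rw [integral_const_mul, integral_mul_const]
  have hsh : (∫ y : ℝ, (y - μ) * Real.exp (-a * (y - μ) ^ 2 + b * (y - μ)))
      = ∫ y : ℝ, y * Real.exp (-a * y ^ 2 + b * y) := by
    rw [← MeasureTheory.integral_add_right_eq_self
      (fun y : ℝ ↦ (y - μ) * Real.exp (-a * (y - μ) ^ 2 + b * (y - μ))) μ]
    simp
  rw [hsh, gauss_first a b ha]
  -- final algebra
  have hba : b ^ 2 / (4 * a) = β ^ 2 * σ ^ 2 / (2 * (1 + β)) := by
    rw [hb, haa]; field_simp; ring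
  have hexpD : Real.exp D = Real.exp (-β * μ) * (σ * Real.sqrt (2 * π)) ^ (-(1 + β)) := by
    rw [hD, hL, show -β * μ - (1 + β) * Real.log (σ * Real.sqrt (2 * π))
        = -β * μ + Real.log (σ * Real.sqrt (2 * π)) * (-(1 + β)) by ring,
      Real.exp_add, ← Real.rpow_def_of_pos hσπ]
  rw [hba, hexpD, Lfactor, Real.exp_add]
  have halg := final_alg σ β hσ hβ
  rw [hb, haa]
  linear_combination
    (Real.exp (-β * μ) * Real.exp (β ^ 2 * σ ^ 2 / (2 * (1 + β)))) * halg
end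

section
/- Let μ ∈ ℝ, σ > 0 and β ≥ 0. Then ∫₀^∞ u₂(x) · f_{μ,σ}(x)^{1+β} dx = β(βσ² − β − 1) · L(β,μ,σ). -/
open Real MeasureTheory Set

lemma integrable_sq_exp {a : ℝ} (ha : 0 < a) :
    Integrable fun x : ℝ => x ^ 2 * Real.exp (-a * x ^ 2) := by
  have := integrable_rpow_mul_exp_neg_mul_sq ha (by norm_num : (-1:ℝ) < 2)
  simpa [Real.rpow_two] using this

lemma gauss1 {a : ℝ} (ha : 0 < a) : ∫ x : ℝ, x * Real.exp (-a * x ^ 2) = 0 := by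
  have hd : ∀ x : ℝ, HasDerivAt (fun x => -(2*a)⁻¹ * Real.exp (-a * x ^ 2))
      (x * Real.exp (-a * x ^ 2)) x := by
    intro x
    have h1 : HasDerivAt (fun x : ℝ => -a * x ^ 2) (-a * (2 * x)) x := by
      simpa using ((hasDerivAt_pow 2 x).const_mul (-a))
    have := (h1.exp).const_mul (-(2*a)⁻¹)
    refine this.congr_deriv ?_
    field_simp
  have := integral_eq_zero_of_hasDerivAt_of_integrable hd
    (integrable_mul_exp_neg_mul_sq ha)
    ((integrable_exp_neg_mul_sq ha).const_mul _)
  simpa using this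

lemma gauss2 {a : ℝ} (ha : 0 < a) :
    ∫ x : ℝ, x ^ 2 * Real.exp (-a * x ^ 2) = Real.sqrt (π / a) / (2 * a) := by
  have hd : ∀ x : ℝ, HasDerivAt (fun x : ℝ => x * Real.exp (-a * x ^ 2))
      (Real.exp (-a * x ^ 2) - 2 * a * (x ^ 2 * Real.exp (-a * x ^ 2))) x := by
    intro x
    have h1 : HasDerivAt (fun x : ℝ => -a * x ^ 2) (-a * (2 * x)) x := by
      simpa using ((hasDerivAt_pow 2 x).const_mul (-a))
    have := (hasDerivAt_id x).mul h1.exp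
    refine this.congr_deriv ?_
    simp only [id_eq]
    ring
  have hint : Integrable fun x : ℝ =>
      Real.exp (-a * x ^ 2) - 2 * a * (x ^ 2 * Real.exp (-a * x ^ 2)) :=
    (integrable_exp_neg_mul_sq ha).sub ((integrable_sq_exp ha).const_mul _)
  have h0 := integral_eq_zero_of_hasDerivAt_of_integrable hd hint
    (integrable_mul_exp_neg_mul_sq ha)
  rw [integral_sub (integrable_exp_neg_mul_sq ha) ((integrable_sq_exp ha).const_mul _),
    integral_const_mul, integral_gaussian, sub_eq_zero] at h0
  have h2a : (2 * a) ≠ 0 := by positivity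
  rw [eq_div_iff h2a, mul_comm]
  exact h0.symm

lemma gaussQuad {a : ℝ} (ha : 0 < a) (m c : ℝ) :
    ∫ t : ℝ, ((t - m) ^ 2 - c) * Real.exp (-a * t ^ 2) =
      Real.sqrt (π / a) / (2 * a) + (m ^ 2 - c) * Real.sqrt (π / a) := by
  have h1 : ∀ t : ℝ, ((t - m) ^ 2 - c) * Real.exp (-a * t ^ 2) =
      t ^ 2 * Real.exp (-a * t ^ 2) - (2 * m) * (t * Real.exp (-a * t ^ 2)) +
        (m ^ 2 - c) * Real.exp (-a * t ^ 2) := fun t => by ring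
  simp_rw [h1]
  have i2 := integrable_sq_exp ha
  have i1 : Integrable fun t : ℝ => (2 * m) * (t * Real.exp (-a * t ^ 2)) :=
    (integrable_mul_exp_neg_mul_sq ha).const_mul _
  have i0 : Integrable fun t : ℝ => (m ^ 2 - c) * Real.exp (-a * t ^ 2) :=
    (integrable_exp_neg_mul_sq ha).const_mul _
  have i21 : Integrable fun t : ℝ =>
      t ^ 2 * Real.exp (-a * t ^ 2) - (2 * m) * (t * Real.exp (-a * t ^ 2)) := i2.sub i1
  rw [integral_add i21 i0, integral_sub i2 i1,
    integral_const_mul, integral_const_mul, gauss1 ha, gauss2 ha, integral_gaussian]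
  ring

lemma integral_Ioi_comp_exp (g : ℝ → ℝ) :
    ∫ x in Ioi (0:ℝ), g x = ∫ t : ℝ, Real.exp t * g (Real.exp t) := by
  have := integral_image_eq_integral_abs_deriv_smul (s := (univ : Set ℝ)) MeasurableSet.univ
    (fun x _ => (Real.hasDerivAt_exp x).hasDerivWithinAt) (Real.exp_injective.injOn) g
  simpa [Set.image_univ, Real.range_exp, abs_of_pos (Real.exp_pos _), smul_eq_mul] using this

lemma keyPoint (μ σ β t : ℝ) (hσ : 0 < σ) (hβ : 0 ≤ β) :
    Real.exp t * (scoreU2 μ σ (Real.exp t) * lognormalPdf μ σ (Real.exp t) ^ (1 + β)) =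
      ((σ * Real.sqrt (2 * π)) ^ (-(1 + β)) *
          Real.exp (-β * μ + β ^ 2 * σ ^ 2 / (2 * (1 + β))) / σ ^ 3) *
        (((t - μ) ^ 2 - σ ^ 2) *
          Real.exp (-((1 + β) / (2 * σ ^ 2)) * (t - (μ - β * σ ^ 2 / (1 + β))) ^ 2)) := by
  have hB : (0:ℝ) < 1 + β := by linarith
  have hS : (0:ℝ) < Real.sqrt (2 * π) := Real.sqrt_pos.mpr (by positivity)
  have hpdf : lognormalPdf μ σ (Real.exp t) =
      Real.exp (-t + -(t - μ) ^ 2 / (2 * σ ^ 2)) * (σ * Real.sqrt (2 * π))⁻¹ := by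
    rw [lognormalPdf, if_pos (Real.exp_pos t), Real.log_exp, Real.exp_add, Real.exp_neg]
    field_simp [Real.exp_ne_zero]
  have hrpow : lognormalPdf μ σ (Real.exp t) ^ (1 + β) =
      Real.exp ((-t + -(t - μ) ^ 2 / (2 * σ ^ 2)) * (1 + β)) *
        (σ * Real.sqrt (2 * π)) ^ (-(1 + β)) := by
    rw [hpdf, Real.mul_rpow (Real.exp_nonneg _) (inv_nonneg.mpr (by positivity)),
      ← Real.exp_mul, Real.inv_rpow (by positivity), ← Real.rpow_neg (by positivity)]
  have hexp : t + (-t + -(t - μ) ^ 2 / (2 * σ ^ 2)) * (1 + β) =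
      (-β * μ + β ^ 2 * σ ^ 2 / (2 * (1 + β))) +
        -((1 + β) / (2 * σ ^ 2)) * (t - (μ - β * σ ^ 2 / (1 + β))) ^ 2 := by
    field_simp
    ring
  rw [hrpow, scoreU2, Real.log_exp]
  rw [show Real.exp t * (((t - μ) ^ 2 - σ ^ 2) / σ ^ 3 *
      (Real.exp ((-t + -(t - μ) ^ 2 / (2 * σ ^ 2)) * (1 + β)) *
        (σ * Real.sqrt (2 * π)) ^ (-(1 + β)))) =
      (σ * Real.sqrt (2 * π)) ^ (-(1 + β)) / σ ^ 3 *
      (((t - μ) ^ 2 - σ ^ 2) *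
        (Real.exp t * Real.exp ((-t + -(t - μ) ^ 2 / (2 * σ ^ 2)) * (1 + β)))) from by ring]
  rw [← Real.exp_add, hexp, Real.exp_add]
  ring

/-- Second component of `ξ(μ,σ)`: the integral of `u₂ · f^{1+β}` over `(0,∞)`. -/
theorem xi_second_component (μ σ β : ℝ) (hσ : 0 < σ) (hβ : 0 ≤ β) :
    ∫ x in Ioi (0 : ℝ), scoreU2 μ σ x * lognormalPdf μ σ x ^ (1 + β) =
      β * (β * σ ^ 2 - β - 1) * Lfactor β μ σ := by
  have hB : (0:ℝ) < 1 + β := by linarith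
  have ha : (0:ℝ) < (1 + β) / (2 * σ ^ 2) := by positivity
  have hS : (0:ℝ) < Real.sqrt (2 * π) := Real.sqrt_pos.mpr (by positivity)
  rw [integral_Ioi_comp_exp]
  simp_rw [keyPoint μ σ β _ hσ hβ]
  rw [integral_const_mul]
  set a : ℝ := (1 + β) / (2 * σ ^ 2) with ha_def
  set m : ℝ := β * σ ^ 2 / (1 + β) with hm_def
  set d : ℝ := μ - m with hd_def
  have hshift : ∀ t : ℝ, ((t - μ) ^ 2 - σ ^ 2) * Real.exp (-a * (t - d) ^ 2) =
      (fun u : ℝ => ((u - m) ^ 2 - σ ^ 2) * Real.exp (-a * u ^ 2)) (t - d) := by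
    intro t
    have : t - μ = (t - d) - m := by rw [hd_def]; ring
    simp only [this]
  simp_rw [hshift]
  rw [integral_sub_right_eq_self (fun u : ℝ => ((u - m) ^ 2 - σ ^ 2) * Real.exp (-a * u ^ 2)) d,
    gaussQuad ha m (σ ^ 2)]
  -- now pure algebra with rpow
  have hRpos : (0:ℝ) < Real.sqrt (1 + β) := Real.sqrt_pos.mpr hB
  have hsqrt : Real.sqrt (π / a) = Real.sqrt (2 * π) * σ / Real.sqrt (1 + β) := by
    rw [ha_def, show π / ((1 + β) / (2 * σ ^ 2)) = (2 * π) * σ ^ 2 / (1 + β) from by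
        field_simp,
      Real.sqrt_div (by positivity), Real.sqrt_mul (by positivity), Real.sqrt_sq hσ.le]
  have hP : (σ * Real.sqrt (2 * π)) ^ (-(1 + β)) =
      (σ ^ (1 + β) * (2 * π) ^ (β / 2) * Real.sqrt (2 * π))⁻¹ := by
    have hSpow : Real.sqrt (2 * π) ^ (1 + β : ℝ) = (2 * π) ^ (β / 2 : ℝ) * Real.sqrt (2 * π) := by
      rw [Real.sqrt_eq_rpow, ← Real.rpow_mul (by positivity),
        show (1/2 * (1 + β) : ℝ) = β / 2 + 1/2 from by ring,
        Real.rpow_add (by positivity), ← Real.sqrt_eq_rpow]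
    rw [Real.rpow_neg (by positivity), Real.mul_rpow hσ.le hS.le, hSpow, mul_assoc]
  have h52 : (1 + β) ^ ((5:ℝ) / 2) = Real.sqrt (1 + β) * (1 + β) ^ 2 := by
    rw [show ((5:ℝ)/2) = 1/2 + (2:ℕ) from by norm_num, Real.rpow_add hB,
      Real.rpow_natCast, Real.sqrt_eq_rpow]
  rw [hsqrt, hP, Lfactor, h52, hm_def, ha_def]
  have hXpos : (0:ℝ) < σ ^ (1 + β) := Real.rpow_pos_of_pos hσ _
  have hPpos : (0:ℝ) < (2 * π) ^ (β / 2 : ℝ) := Real.rpow_pos_of_pos (by positivity) _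
  field_simp
  ring
end

section
/- Let μ ∈ ℝ, σ > 0 and β ≥ 0. Then the (1,1) entry of the matrix J_β(μ,σ) = ∫₀^∞ u_{μ,σ}(x) u_{μ,σ}(x)ᵀ f_{μ,σ}(x)^{1+β} dx satisfies ∫₀^∞ u₁(x)² · f_{μ,σ}(x)^{1+β} dx = L(β,μ,σ) · (1 + β + β²σ²)/σ. -/
open Real MeasureTheory Set

lemma odd_gauss {b : ℝ} : ∫ x : ℝ, x * Real.exp (-b * x ^ 2) = 0 := by
  have h := integral_neg_eq_self (fun x : ℝ => x * Real.exp (-b * x ^ 2)) (volume : Measure ℝ)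
  simp only [neg_sq, neg_mul] at h ⊢
  rw [integral_neg] at h
  linarith

lemma sq_gauss {b : ℝ} (hb : 0 < b) :
    ∫ x : ℝ, x ^ 2 * Real.exp (-b * x ^ 2) = Real.sqrt (π / b) / (2 * b) := by
  have h1 : ∫ x : ℝ, x ^ 2 * Real.exp (-b * x ^ 2)
      = 2 * ∫ x in Ioi (0:ℝ), x ^ 2 * Real.exp (-b * x ^ 2) := by
    rw [← integral_comp_abs (f := fun x => x ^ 2 * Real.exp (-b * x ^ 2))]
    congr 1; funext x; rw [sq_abs]
  have h2 : ∫ x in Ioi (0:ℝ), x ^ 2 * Real.exp (-b * x ^ 2)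
      = ∫ x in Ioi (0:ℝ), x ^ (2:ℝ) * Real.exp (-b * x ^ (2:ℝ)) := by
    refine setIntegral_congr_fun measurableSet_Ioi fun x hx => ?_
    rw [show (2:ℝ) = ((2:ℕ):ℝ) by norm_num, Real.rpow_natCast]
  have hG : Real.Gamma (((2:ℝ) + 1) / 2) = Real.sqrt π / 2 := by
    rw [show ((2:ℝ)+1)/2 = 1/2 + 1 by norm_num, Real.Gamma_add_one (by norm_num),
      Real.Gamma_one_half_eq]
    ring
  rw [h1, h2, integral_rpow_mul_exp_neg_mul_rpow two_pos (by norm_num) hb, hG]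
  have hbh : (0:ℝ) < b ^ ((1:ℝ)/2) := Real.rpow_pos_of_pos hb _
  have hbneg : b ^ (-((2:ℝ)+1)/2) = (b⁻¹) * (b ^ ((1:ℝ)/2))⁻¹ := by
    rw [← Real.rpow_neg_one, ← Real.rpow_neg hb.le, ← Real.rpow_add hb]
    norm_num
  have hsq : Real.sqrt (π / b) = Real.sqrt π / b ^ ((1:ℝ)/2) := by
    rw [Real.sqrt_div pi_pos.le, Real.sqrt_eq_rpow b]
  rw [hbneg, hsq]
  field_simp

lemma int_sq_gauss {b : ℝ} (hb : 0 < b) :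
    Integrable (fun x : ℝ => x ^ 2 * Real.exp (-b * x ^ 2)) := by
  have h := integrable_rpow_mul_exp_neg_mul_sq hb (show (-1:ℝ) < 2 by norm_num)
  have he : (fun x : ℝ => x ^ (2:ℝ) * Real.exp (-b * x ^ 2))
      = fun x : ℝ => x ^ 2 * Real.exp (-b * x ^ 2) := by
    funext x
    rw [show (2:ℝ) = ((2:ℕ):ℝ) by norm_num, Real.rpow_natCast]
  rwa [he] at h

lemma gauss_moment {a m c : ℝ} (ha : 0 < a) :
    ∫ y : ℝ, (y - c) ^ 2 * Real.exp (-a * (y - m) ^ 2)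
      = Real.sqrt (π / a) / (2 * a) + (m - c) ^ 2 * Real.sqrt (π / a) := by
  have hshift := integral_add_right_eq_self (μ := volume)
    (fun y : ℝ => (y - c) ^ 2 * Real.exp (-a * (y - m) ^ 2)) m
  rw [← hshift]
  have hexp : ∀ x : ℝ, (x + m - c) ^ 2 * Real.exp (-a * (x + m - m) ^ 2)
      = x ^ 2 * Real.exp (-a * x ^ 2) + (2 * (m - c)) * (x * Real.exp (-a * x ^ 2))
        + (m - c) ^ 2 * Real.exp (-a * x ^ 2) := by
    intro x
    have : x + m - m = x := by ring
    rw [this]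
    ring
  simp only [hexp]
  have i1 : Integrable (fun x : ℝ => x ^ 2 * Real.exp (-a * x ^ 2)) := int_sq_gauss ha
  have i2 : Integrable (fun x : ℝ => 2 * (m - c) * (x * Real.exp (-a * x ^ 2))) :=
    (integrable_mul_exp_neg_mul_sq ha).const_mul _
  have i3 : Integrable (fun x : ℝ => (m - c) ^ 2 * Real.exp (-a * x ^ 2)) :=
    (integrable_exp_neg_mul_sq ha).const_mul _
  have i12 : Integrable (fun x : ℝ => x ^ 2 * Real.exp (-a * x ^ 2)
      + 2 * (m - c) * (x * Real.exp (-a * x ^ 2))) := i1.add i2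
  rw [integral_add i12 i3, integral_add i1 i2,
    MeasureTheory.integral_const_mul, MeasureTheory.integral_const_mul, odd_gauss, sq_gauss ha, integral_gaussian]
  ring

/-- The `(1,1)` entry of the matrix `J_β(μ,σ)`. -/
theorem J_entry_11 (μ σ β : ℝ) (hσ : 0 < σ) (hβ : 0 ≤ β) :
    ∫ x in Ioi (0 : ℝ), scoreU1 μ σ x ^ 2 * lognormalPdf μ σ x ^ (1 + β) =
      Lfactor β μ σ * ((1 + β + β ^ 2 * σ ^ 2) / σ) := by
  have hβ1 : (0:ℝ) < 1 + β := by linarith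
  have hσ' : σ ≠ 0 := hσ.ne'
  set s : ℝ := Real.sqrt (2 * π) with hs_def
  have hs_pos : 0 < s := Real.sqrt_pos.mpr (by positivity)
  set a : ℝ := (1 + β) / (2 * σ ^ 2) with ha_def
  have ha : 0 < a := by positivity
  set m : ℝ := μ - β * σ ^ 2 / (1 + β) with hm_def
  set C : ℝ := ((σ * s)⁻¹) ^ (1 + β) * Real.exp (-β * μ + β ^ 2 * σ ^ 2 / (2 * (1 + β))) / σ ^ 4
    with hC_def
  -- Step 1: substitution x = exp y
  have hsub : ∫ x in Ioi (0 : ℝ), scoreU1 μ σ x ^ 2 * lognormalPdf μ σ x ^ (1 + β)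
      = ∫ y : ℝ, |Real.exp y| • (scoreU1 μ σ (Real.exp y) ^ 2
          * lognormalPdf μ σ (Real.exp y) ^ (1 + β)) := by
    rw [show Ioi (0:ℝ) = Real.exp '' univ by rw [image_univ, Real.range_exp],
      integral_image_eq_integral_abs_deriv_smul MeasurableSet.univ
        (fun x _ => (Real.hasDerivAt_exp x).hasDerivWithinAt)
        (Real.exp_injective.injOn)
        (fun x => scoreU1 μ σ x ^ 2 * lognormalPdf μ σ x ^ (1 + β)),
      Measure.restrict_univ]
  -- Step 2: pointwise identity
  have hpoint : ∀ y : ℝ, |Real.exp y| • (scoreU1 μ σ (Real.exp y) ^ 2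
        * lognormalPdf μ σ (Real.exp y) ^ (1 + β))
      = C * ((y - μ) ^ 2 * Real.exp (-a * (y - m) ^ 2)) := by
    intro y
    rw [smul_eq_mul, abs_of_pos (Real.exp_pos y)]
    unfold lognormalPdf scoreU1
    rw [if_pos (Real.exp_pos y), Real.log_exp]
    have hfac : 1 / (Real.exp y * σ * s) = (σ * s)⁻¹ * Real.exp (-y) := by
      rw [Real.exp_neg]
      field_simp
    rw [hfac, mul_assoc ((σ * s)⁻¹), ← Real.exp_add,
      Real.mul_rpow (by positivity) (Real.exp_nonneg _), ← Real.exp_mul]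
    have hexp : y + (-y + -(y - μ) ^ 2 / (2 * σ ^ 2)) * (1 + β)
        = (-β * μ + β ^ 2 * σ ^ 2 / (2 * (1 + β))) + -a * (y - m) ^ 2 := by
      rw [ha_def, hm_def]
      field_simp
      ring
    have : Real.exp y * (((y - μ) / σ ^ 2) ^ 2
          * (((σ * s)⁻¹) ^ (1 + β) * Real.exp ((-y + -(y - μ) ^ 2 / (2 * σ ^ 2)) * (1 + β))))
        = ((σ * s)⁻¹) ^ (1 + β) * ((y - μ) ^ 2 / σ ^ 4)
          * Real.exp (y + (-y + -(y - μ) ^ 2 / (2 * σ ^ 2)) * (1 + β)) := by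
      rw [Real.exp_add]
      field_simp
    rw [this, hexp, Real.exp_add, hC_def]
    ring
  simp only [hsub, hpoint]
  rw [MeasureTheory.integral_const_mul, gauss_moment ha]
  -- Step 3: numeric identity
  have hma : m - μ = -(β * σ ^ 2 / (1 + β)) := by rw [hm_def]; ring
  set r : ℝ := Real.sqrt (1 + β) with hr_def
  have hr_pos : 0 < r := Real.sqrt_pos.mpr hβ1
  have hr2 : r ^ 2 = 1 + β := Real.sq_sqrt hβ1.le
  have hs2 : s ^ 2 = 2 * π := Real.sq_sqrt (by positivity)
  have hsqa : Real.sqrt (π / a) = s * σ / r := by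
    rw [show π / a = (2 * π) * σ ^ 2 / (1 + β) by rw [ha_def]; field_simp,
      Real.sqrt_div (by positivity), Real.sqrt_mul (by positivity), Real.sqrt_sq hσ.le]
  -- relate C to Lfactor
  set B : ℝ := (2 * π) ^ (β / 2 : ℝ) with hB_def
  have hB_pos : 0 < B := Real.rpow_pos_of_pos (by positivity) _
  set A : ℝ := σ ^ (1 + β : ℝ) with hA_def
  have hA_pos : 0 < A := Real.rpow_pos_of_pos hσ _
  have hsrpow : s ^ (1 + β : ℝ) = s * B := by
    rw [hs_def, Real.sqrt_eq_rpow, ← Real.rpow_mul (by positivity : (0:ℝ) ≤ 2 * π), hB_def,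
      ← Real.rpow_add (by positivity : (0:ℝ) < 2 * π)]
    congr 1
    ring
  have hCval : C = (A * s * B)⁻¹ * Real.exp (-β * μ + β ^ 2 * σ ^ 2 / (2 * (1 + β))) / σ ^ 4 := by
    rw [hC_def, Real.inv_rpow (by positivity), Real.mul_rpow hσ.le hs_pos.le, hsrpow, hA_def]
    ring_nf
  have hLval : Lfactor β μ σ
      = Real.exp (-β * μ + β ^ 2 * σ ^ 2 / (2 * (1 + β))) / (A * B * r ^ 5) := by
    rw [Lfactor, hA_def, hB_def, hr_def]
    congr 2
    rw [Real.sqrt_eq_rpow, ← Real.rpow_natCast ((1+β) ^ ((1:ℝ)/2)) 5,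
      ← Real.rpow_mul hβ1.le]
    norm_num
  rw [hCval, hLval, hma, hsqa]
  have h2a : 2 * a = r ^ 2 / σ ^ 2 := by rw [ha_def, ← hr2]; field_simp
  rw [h2a, ← hr2]
  field_simp
end

section
/- Let μ ∈ ℝ, σ > 0 and β ≥ 0. Then the off-diagonal entry of the matrix J_β(μ,σ) = ∫₀^∞ u_{μ,σ}(x) u_{μ,σ}(x)ᵀ f_{μ,σ}(x)^{1+β} dx satisfies ∫₀^∞ u₁(x) u₂(x) · f_{μ,σ}(x)^{1+β} dx = L(β,μ,σ) · β(β − 2 − β²σ²/(1+β)). -/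
open Real MeasureTheory Set

lemma int_odd_pow_gauss (k : ℝ) (n : ℕ) (hn : Odd n) :
    ∫ x : ℝ, x ^ n * Real.exp (-k * x ^ 2) = 0 := by
  have h : ∀ x : ℝ, (-x) ^ n * Real.exp (-k * (-x) ^ 2)
      = -(x ^ n * Real.exp (-k * x ^ 2)) := by
    intro x
    rw [hn.neg_pow, neg_sq, neg_mul]
  have := MeasureTheory.integral_neg_eq_self
    (fun x : ℝ => x ^ n * Real.exp (-k * x ^ 2)) (volume : Measure ℝ)
  simp_rw [h] at this
  rw [integral_neg] at this
  linarith

lemma int_sq_gauss_s6 {k : ℝ} (hk : 0 < k) :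
    ∫ x : ℝ, x ^ 2 * Real.exp (-k * x ^ 2) = Real.sqrt (π / k) / (2 * k) := by
  have heven : ∀ x : ℝ, |x| ^ 2 * Real.exp (-k * |x| ^ 2)
      = x ^ 2 * Real.exp (-k * x ^ 2) := by intro x; rw [sq_abs]
  have h2 : ∫ x : ℝ, x ^ 2 * Real.exp (-k * x ^ 2)
      = 2 * ∫ x in Ioi (0:ℝ), x ^ 2 * Real.exp (-k * x ^ 2) := by
    rw [← integral_comp_abs (f := fun x => x ^ 2 * Real.exp (-k * x ^ 2))]
    simp_rw [heven]
  have h3 : ∫ x in Ioi (0:ℝ), x ^ 2 * Real.exp (-k * x ^ 2)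
      = ∫ x in Ioi (0:ℝ), x ^ (2:ℝ) * Real.exp (-k * x ^ (2:ℝ)) := by
    refine setIntegral_congr_fun measurableSet_Ioi (fun x hx => ?_)
    rw [show (2:ℝ) = ((2:ℕ):ℝ) by norm_num, Real.rpow_natCast]
  rw [h2, h3, integral_rpow_mul_exp_neg_mul_rpow (by norm_num) (by norm_num) hk]
  have hΓ : Real.Gamma ((2 + 1) / 2) = Real.sqrt π / 2 := by
    have : ((2:ℝ) + 1) / 2 = 1 / 2 + 1 := by norm_num
    rw [this, Real.Gamma_add_one (by norm_num), Real.Gamma_one_half_eq]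
    ring
  rw [hΓ]
  have hk32 : k ^ (-((2:ℝ) + 1) / 2) = 1 / (k * Real.sqrt k) := by
    rw [show (-((2:ℝ) + 1) / 2) = -(1 + 1/2 : ℝ) by norm_num, Real.rpow_neg hk.le,
      Real.rpow_add hk, Real.rpow_one, ← Real.sqrt_eq_rpow, one_div]
  have hs : Real.sqrt (π / k) = Real.sqrt π / Real.sqrt k := Real.sqrt_div pi_pos.le k
  have hsk : (0:ℝ) < Real.sqrt k := Real.sqrt_pos.mpr hk
  rw [hk32, hs]
  have hkk : Real.sqrt k * Real.sqrt k = k := Real.mul_self_sqrt hk.le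
  field_simp

lemma integ_pow_gauss {k : ℝ} (hk : 0 < k) (n : ℕ) :
    Integrable fun x : ℝ => x ^ n * Real.exp (-k * x ^ 2) := by
  have h := integrable_rpow_mul_exp_neg_mul_sq hk (s := (n:ℝ))
    (lt_of_lt_of_le neg_one_lt_zero (Nat.cast_nonneg n))
  simpa [Real.rpow_natCast] using h

lemma int_cubic_gauss {k : ℝ} (hk : 0 < k) (c0 c1 c2 c3 : ℝ) :
    ∫ x : ℝ, (c3 * x ^ 3 + c2 * x ^ 2 + c1 * x + c0) * Real.exp (-k * x ^ 2)
      = c2 * (Real.sqrt (π / k) / (2 * k)) + c0 * Real.sqrt (π / k) := by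
  have e : ∀ x : ℝ, (c3 * x ^ 3 + c2 * x ^ 2 + c1 * x + c0) * Real.exp (-k * x ^ 2)
      = c3 * (x ^ 3 * Real.exp (-k * x ^ 2)) + (c2 * (x ^ 2 * Real.exp (-k * x ^ 2))
        + (c1 * (x ^ 1 * Real.exp (-k * x ^ 2)) + c0 * (x ^ 0 * Real.exp (-k * x ^ 2)))) := by
    intro x; ring
  simp_rw [e]
  have i3 : Integrable fun x : ℝ => c3 * (x ^ 3 * Real.exp (-k * x ^ 2)) :=
    (integ_pow_gauss hk 3).const_mul _
  have i2 : Integrable fun x : ℝ => c2 * (x ^ 2 * Real.exp (-k * x ^ 2)) :=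
    (integ_pow_gauss hk 2).const_mul _
  have i1 : Integrable fun x : ℝ => c1 * (x ^ 1 * Real.exp (-k * x ^ 2)) :=
    (integ_pow_gauss hk 1).const_mul _
  have i0 : Integrable fun x : ℝ => c0 * (x ^ 0 * Real.exp (-k * x ^ 2)) :=
    (integ_pow_gauss hk 0).const_mul _
  have i10 : Integrable fun x : ℝ => c1 * (x ^ 1 * Real.exp (-k * x ^ 2))
      + c0 * (x ^ 0 * Real.exp (-k * x ^ 2)) := i1.add i0
  have i210 : Integrable fun x : ℝ => c2 * (x ^ 2 * Real.exp (-k * x ^ 2))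
      + (c1 * (x ^ 1 * Real.exp (-k * x ^ 2)) + c0 * (x ^ 0 * Real.exp (-k * x ^ 2))) :=
    i2.add i10
  rw [integral_add i3 i210, integral_add i2 i10, integral_add i1 i0,
    integral_const_mul, integral_const_mul, integral_const_mul, integral_const_mul,
    int_odd_pow_gauss k 3 ⟨1, by norm_num⟩, int_odd_pow_gauss k 1 ⟨0, by norm_num⟩,
    int_sq_gauss_s6 hk]
  simp_rw [pow_zero, one_mul]
  rw [integral_gaussian]
  ring


/-- The off-diagonal entry of the matrix `J_β(μ,σ)`. -/
theorem J_entry_12 (μ σ β : ℝ) (hσ : 0 < σ) (hβ : 0 ≤ β) :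
    ∫ x in Ioi (0 : ℝ), scoreU1 μ σ x * scoreU2 μ σ x * lognormalPdf μ σ x ^ (1 + β) =
      Lfactor β μ σ * (β * (β - 2 - β ^ 2 * σ ^ 2 / (1 + β))) := by
  have h2π : (0:ℝ) < 2 * π := by positivity
  have hs2 : (0:ℝ) < Real.sqrt (2 * π) := Real.sqrt_pos.mpr h2π
  have hσs : (0:ℝ) < σ * Real.sqrt (2 * π) := by positivity
  have h1β : (0:ℝ) < 1 + β := by linarith
  set C : ℝ := Real.log (σ * Real.sqrt (2 * π)) with hC
  set k : ℝ := (1 + β) / (2 * σ ^ 2) with hkdef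
  have hk : 0 < k := by positivity
  set a : ℝ := β * σ ^ 2 / (1 + β) with ha
  set K : ℝ := -β * μ + β ^ 2 * σ ^ 2 / (2 * (1 + β)) - (1 + β) * C with hK
  -- Step 1: pdf formula on Ioi 0
  have hpdf : ∀ x : ℝ, 0 < x → lognormalPdf μ σ x
      = Real.exp (-(Real.log x) - C - (Real.log x - μ) ^ 2 / (2 * σ ^ 2)) := by
    intro x hx
    rw [lognormalPdf, if_pos hx,
      show -(Real.log x) - C - (Real.log x - μ) ^ 2 / (2 * σ ^ 2)
        = (-(Real.log x) - C) + (-(Real.log x - μ) ^ 2 / (2 * σ ^ 2)) by ring,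
      Real.exp_add, Real.exp_sub, Real.exp_neg, Real.exp_log hx, Real.exp_log hσs]
    field_simp
  -- Step 2: rpow of pdf
  have hpdfp : ∀ x : ℝ, 0 < x → lognormalPdf μ σ x ^ (1 + β)
      = Real.exp ((-(Real.log x) - C - (Real.log x - μ) ^ 2 / (2 * σ ^ 2)) * (1 + β)) := by
    intro x hx
    rw [hpdf x hx, ← Real.exp_mul]
  -- Step 3: substitution x = exp t
  set F : ℝ → ℝ := fun x => scoreU1 μ σ x * scoreU2 μ σ x * lognormalPdf μ σ x ^ (1 + β)
    with hF
  have hsub : ∫ x in Ioi (0 : ℝ), F x = ∫ t : ℝ, Real.exp t * F (Real.exp t) := by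
    have him := integral_image_eq_integral_abs_deriv_smul (s := (univ : Set ℝ))
      MeasurableSet.univ (f := Real.exp) (f' := Real.exp)
      (fun x _ => (Real.hasDerivAt_exp x).hasDerivWithinAt)
      (Real.exp_injective.injOn) F
    rw [image_univ, Real.range_exp, Measure.restrict_univ] at him
    rw [him]
    congr 1
    funext t
    rw [abs_of_pos (Real.exp_pos t), smul_eq_mul]
  -- Step 4: rewrite integrand after substitution
  have hG : ∀ t : ℝ, Real.exp t * F (Real.exp t)
      = ((t - μ) / σ ^ 2) * (((t - μ) ^ 2 - σ ^ 2) / σ ^ 3) *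
          Real.exp (-β * t - (1 + β) * C - (1 + β) * (t - μ) ^ 2 / (2 * σ ^ 2)) := by
    intro t
    have het : (0:ℝ) < Real.exp t := Real.exp_pos t
    rw [hF]
    simp only [scoreU1, scoreU2, hpdfp _ het, Real.log_exp]
    rw [mul_left_comm, ← Real.exp_add]
    congr 1
    ring
  -- coefficients
  set E0 : ℝ := Real.exp K with hE0
  have hc : ∀ y : ℝ,
      ((y + (μ - a)) - μ) / σ ^ 2 * ((((y + (μ - a)) - μ) ^ 2 - σ ^ 2) / σ ^ 3) *
        Real.exp (-β * (y + (μ - a)) - (1 + β) * C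
          - (1 + β) * ((y + (μ - a)) - μ) ^ 2 / (2 * σ ^ 2))
      = ((E0 / σ ^ 5) * y ^ 3 + (-3 * a * E0 / σ ^ 5) * y ^ 2
          + ((3 * a ^ 2 - σ ^ 2) * E0 / σ ^ 5) * y + ((σ ^ 2 * a - a ^ 3) * E0 / σ ^ 5))
          * Real.exp (-k * y ^ 2) := by
    intro y
    have hE : -β * (y + (μ - a)) - (1 + β) * C
        - (1 + β) * ((y + (μ - a)) - μ) ^ 2 / (2 * σ ^ 2) = K + (-k * y ^ 2) := by
      rw [hK, hkdef, ha]
      field_simp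
      ring
    rw [hE, Real.exp_add, ← hE0]
    field_simp
    ring
  -- put the chain together
  have hval : ∫ x in Ioi (0 : ℝ), F x
      = (-3 * a * E0 / σ ^ 5) * (Real.sqrt (π / k) / (2 * k))
        + ((σ ^ 2 * a - a ^ 3) * E0 / σ ^ 5) * Real.sqrt (π / k) := by
    rw [hsub]
    rw [integral_congr_ae (Filter.Eventually.of_forall hG)]
    rw [← integral_add_right_eq_self (fun t : ℝ =>
      (t - μ) / σ ^ 2 * (((t - μ) ^ 2 - σ ^ 2) / σ ^ 3) *
        Real.exp (-β * t - (1 + β) * C - (1 + β) * (t - μ) ^ 2 / (2 * σ ^ 2))) (μ - a)]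
    rw [integral_congr_ae (Filter.Eventually.of_forall hc)]
    exact int_cubic_gauss hk _ _ _ _
  rw [show (∫ x in Ioi (0 : ℝ), scoreU1 μ σ x * scoreU2 μ σ x
      * lognormalPdf μ σ x ^ (1 + β)) = ∫ x in Ioi (0 : ℝ), F x from rfl, hval]
  -- final algebra
  have hsqrtπk : Real.sqrt (π / k) = Real.sqrt (2 * π) * σ / Real.sqrt (1 + β) := by
    rw [hkdef, show π / ((1 + β) / (2 * σ ^ 2)) = 2 * π * σ ^ 2 / (1 + β) by
      field_simp, Real.sqrt_div (by positivity) (1 + β),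
      Real.sqrt_mul h2π.le, Real.sqrt_sq hσ.le]
  have hexpK : E0 = Real.exp (-β * μ + β ^ 2 * σ ^ 2 / (2 * (1 + β)))
      * (σ * Real.sqrt (2 * π)) ^ (-(1 + β)) := by
    rw [hE0, hK, sub_eq_add_neg, Real.exp_add, Real.rpow_def_of_pos hσs, ← hC]
    congr 1
    ring
  have hmul : (σ * Real.sqrt (2 * π)) ^ (-(1 + β))
      = (σ ^ (1 + β) * Real.sqrt (2 * π) ^ (1 + β))⁻¹ := by
    rw [Real.rpow_neg hσs.le, Real.mul_rpow hσ.le hs2.le]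
  have hs2p : Real.sqrt (2 * π) ^ (1 + β) = (2 * π) ^ (β / 2) * Real.sqrt (2 * π) := by
    nth_rewrite 1 [Real.sqrt_eq_rpow]
    rw [← Real.rpow_mul h2π.le, show (1 / 2 : ℝ) * (1 + β) = β / 2 + 1 / 2 by ring,
      Real.rpow_add h2π, ← Real.sqrt_eq_rpow]
  have h1βp : (1 + β) ^ ((5 : ℝ) / 2) = Real.sqrt (1 + β) * (1 + β) ^ 2 := by
    rw [show ((5 : ℝ) / 2) = 1 / 2 + ((2 : ℕ) : ℝ) by norm_num, Real.rpow_add h1β,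
      Real.rpow_natCast, ← Real.sqrt_eq_rpow]
  have hσp : (0 : ℝ) < σ ^ (1 + β) := Real.rpow_pos_of_pos hσ _
  have h2πp : (0 : ℝ) < (2 * π) ^ (β / 2) := Real.rpow_pos_of_pos h2π _
  have hs1 : (0 : ℝ) < Real.sqrt (1 + β) := Real.sqrt_pos.mpr h1β
  rw [hsqrtπk, hexpK, hmul, hs2p, Lfactor, h1βp, ha, hkdef]
  have hE1 : (0 : ℝ) < Real.exp (-β * μ + β ^ 2 * σ ^ 2 / (2 * (1 + β))) := Real.exp_pos _
  field_simp
  ring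
end

section
/- Let μ ∈ ℝ, σ > 0 and β ≥ 0. Then the (2,2) entry of the matrix J_β(μ,σ) = ∫₀^∞ u_{μ,σ}(x) u_{μ,σ}(x)ᵀ f_{μ,σ}(x)^{1+β} dx satisfies ∫₀^∞ u₂(x)² · f_{μ,σ}(x)^{1+β} dx = (L(β,μ,σ)/σ) · ( β⁴σ⁴/(1+β)² + 6β²σ²/(1+β) + β²(1 − 2σ²) + 2 ). -/
open Real MeasureTheory Set

lemma integrable_pow_mul_gauss {a : ℝ} (ha : 0 < a) (n : ℕ) :
    Integrable (fun t : ℝ => t ^ n * Real.exp (-a * t ^ 2)) := by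
  have := integrable_rpow_mul_exp_neg_mul_sq ha (s := (n : ℝ))
    (lt_of_lt_of_le neg_one_lt_zero (Nat.cast_nonneg n))
  simpa [Real.rpow_natCast] using this

lemma gauss_moment_step {a : ℝ} (ha : 0 < a) (n : ℕ) :
    ∫ t : ℝ, t ^ (n + 2) * Real.exp (-a * t ^ 2) =
      ((n : ℝ) + 1) / (2 * a) * ∫ t : ℝ, t ^ n * Real.exp (-a * t ^ 2) := by
  have hderiv : ∀ t : ℝ, HasDerivAt (fun t : ℝ => t ^ (n + 1) * Real.exp (-a * t ^ 2))
      (((n : ℝ) + 1) * t ^ n * Real.exp (-a * t ^ 2)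
        - 2 * a * (t ^ (n + 2) * Real.exp (-a * t ^ 2))) t := by
    intro t
    have h1 : HasDerivAt (fun t : ℝ => t ^ (n + 1)) (((n : ℝ) + 1) * t ^ n) t := by
      simpa using hasDerivAt_pow (n + 1) t
    have h2 : HasDerivAt (fun t : ℝ => Real.exp (-a * t ^ 2)) (Real.exp (-a * t ^ 2) * (-a * (2 * t))) t := by
      have : HasDerivAt (fun t : ℝ => -a * t ^ 2) (-a * (2 * t)) t := by
        simpa using ((hasDerivAt_pow 2 t).const_mul (-a))
      exact this.exp
    have := h1.mul h2
    exact this.congr_deriv (by ring)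
  have hintA : Integrable (fun t : ℝ => ((n : ℝ) + 1) * t ^ n * Real.exp (-a * t ^ 2)) := by
    have := (integrable_pow_mul_gauss ha n).const_mul ((n : ℝ) + 1)
    exact this.congr (by filter_upwards with t; ring)
  have hintB : Integrable (fun t : ℝ => 2 * a * (t ^ (n + 2) * Real.exp (-a * t ^ 2))) :=
    (integrable_pow_mul_gauss ha (n + 2)).const_mul (2 * a)
  have hint : Integrable (fun t : ℝ => ((n : ℝ) + 1) * t ^ n * Real.exp (-a * t ^ 2)
        - 2 * a * (t ^ (n + 2) * Real.exp (-a * t ^ 2))) := hintA.sub hintB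
  have hzero := integral_eq_zero_of_hasDerivAt_of_integrable hderiv hint
    (integrable_pow_mul_gauss ha (n + 1))
  rw [integral_sub hintA hintB] at hzero
  rw [integral_const_mul] at hzero
  have h2 : ∫ t : ℝ, ((n : ℝ) + 1) * t ^ n * Real.exp (-a * t ^ 2)
      = ((n : ℝ) + 1) * ∫ t : ℝ, t ^ n * Real.exp (-a * t ^ 2) := by
    rw [← integral_const_mul]; congr 1; ext t; ring
  rw [h2] at hzero
  have h2a : (2 * a) ≠ 0 := by positivity
  rw [div_mul_eq_mul_div, eq_div_iff h2a]
  linarith [hzero]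

lemma gauss_moment_one {a : ℝ} (ha : 0 < a) :
    ∫ t : ℝ, t ^ 1 * Real.exp (-a * t ^ 2) = 0 := by
  have hderiv : ∀ t : ℝ, HasDerivAt (fun t : ℝ => -(1 / (2 * a)) * Real.exp (-a * t ^ 2))
      (t ^ 1 * Real.exp (-a * t ^ 2)) t := by
    intro t
    have h2 : HasDerivAt (fun t : ℝ => Real.exp (-a * t ^ 2)) (Real.exp (-a * t ^ 2) * (-a * (2 * t))) t := by
      have : HasDerivAt (fun t : ℝ => -a * t ^ 2) (-a * (2 * t)) t := by
        simpa using ((hasDerivAt_pow 2 t).const_mul (-a))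
      exact this.exp
    have := h2.const_mul (-(1 / (2 * a)))
    exact this.congr_deriv (by field_simp)
  exact integral_eq_zero_of_hasDerivAt_of_integrable hderiv (integrable_pow_mul_gauss ha 1)
    ((integrable_exp_neg_mul_sq ha).const_mul _)

lemma gauss_poly_integral {a : ℝ} (ha : 0 < a) (c3 c2 c1 c0 : ℝ) :
    ∫ t : ℝ, (t ^ 4 + c3 * t ^ 3 + c2 * t ^ 2 + c1 * t + c0) * Real.exp (-a * t ^ 2)
      = (3 / (4 * a ^ 2) + c2 / (2 * a) + c0) * Real.sqrt (Real.pi / a) := by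
  have g0 : ∫ t : ℝ, t ^ (0 : ℕ) * Real.exp (-a * t ^ 2) = Real.sqrt (Real.pi / a) := by
    simpa using integral_gaussian a
  have g1 : ∫ t : ℝ, t ^ (1 : ℕ) * Real.exp (-a * t ^ 2) = 0 := gauss_moment_one ha
  have g2 : ∫ t : ℝ, t ^ (2 : ℕ) * Real.exp (-a * t ^ 2)
      = 1 / (2 * a) * Real.sqrt (Real.pi / a) := by
    have := gauss_moment_step ha 0
    rw [this, g0]; norm_num
  have g3 : ∫ t : ℝ, t ^ (3 : ℕ) * Real.exp (-a * t ^ 2) = 0 := by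
    have := gauss_moment_step ha 1
    rw [g1] at this; simpa using this
  have g4 : ∫ t : ℝ, t ^ (4 : ℕ) * Real.exp (-a * t ^ 2)
      = 3 / (4 * a ^ 2) * Real.sqrt (Real.pi / a) := by
    have := gauss_moment_step ha 2
    rw [this, g2]; ring
  have i4 := integrable_pow_mul_gauss ha 4
  have i3 := (integrable_pow_mul_gauss ha 3).const_mul c3
  have i2 := (integrable_pow_mul_gauss ha 2).const_mul c2
  have i1 := (integrable_pow_mul_gauss ha 1).const_mul c1
  have i0 := (integrable_pow_mul_gauss ha 0).const_mul c0
  have hsum : (fun t : ℝ => (t ^ 4 + c3 * t ^ 3 + c2 * t ^ 2 + c1 * t + c0) * Real.exp (-a * t ^ 2))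
      = fun t : ℝ => t ^ 4 * Real.exp (-a * t ^ 2) + (c3 * (t ^ 3 * Real.exp (-a * t ^ 2))
        + (c2 * (t ^ 2 * Real.exp (-a * t ^ 2)) + (c1 * (t ^ 1 * Real.exp (-a * t ^ 2))
        + c0 * (t ^ 0 * Real.exp (-a * t ^ 2))))) := by
    funext t; ring
  have r1 : Integrable (fun t : ℝ => c1 * (t ^ 1 * Real.exp (-a * t ^ 2))
      + c0 * (t ^ 0 * Real.exp (-a * t ^ 2))) := i1.add i0
  have r2 : Integrable (fun t : ℝ => c2 * (t ^ 2 * Real.exp (-a * t ^ 2))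
      + (c1 * (t ^ 1 * Real.exp (-a * t ^ 2)) + c0 * (t ^ 0 * Real.exp (-a * t ^ 2)))) := i2.add r1
  have r3 : Integrable (fun t : ℝ => c3 * (t ^ 3 * Real.exp (-a * t ^ 2))
      + (c2 * (t ^ 2 * Real.exp (-a * t ^ 2)) + (c1 * (t ^ 1 * Real.exp (-a * t ^ 2))
      + c0 * (t ^ 0 * Real.exp (-a * t ^ 2))))) := i3.add r2
  rw [hsum, integral_add i4 r3, integral_add i3 r2, integral_add i2 r1, integral_add i1 i0,
    integral_const_mul, integral_const_mul, integral_const_mul, integral_const_mul,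
    g0, g1, g2, g3, g4]
  ring

/-- The `(2,2)` entry of the matrix `J_β(μ,σ)`. -/
theorem J_entry_22 (μ σ β : ℝ) (hσ : 0 < σ) (hβ : 0 ≤ β) :
    ∫ x in Ioi (0 : ℝ), scoreU2 μ σ x ^ 2 * lognormalPdf μ σ x ^ (1 + β) =
      (Lfactor β μ σ / σ) *
        (β ^ 4 * σ ^ 4 / (1 + β) ^ 2 + 6 * β ^ 2 * σ ^ 2 / (1 + β) +
          β ^ 2 * (1 - 2 * σ ^ 2) + 2) := by
  have hσ' : σ ≠ 0 := ne_of_gt hσ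
  have hc : (0:ℝ) < 1 + β := by linarith
  have hc' : (1:ℝ) + β ≠ 0 := ne_of_gt hc
  set s : ℝ := Real.sqrt (2 * Real.pi) with hs
  have h2π : (0:ℝ) < 2 * Real.pi := by positivity
  have hs0 : 0 < s := Real.sqrt_pos.mpr h2π
  set c : ℝ := 1 + β with hcdef
  set a : ℝ := c / (2 * σ ^ 2) with hadef
  have ha : 0 < a := by rw [hadef]; positivity
  set d : ℝ := -(β * σ ^ 2) / c with hddef
  set m : ℝ := μ + d with hmdef
  set D : ℝ := -β * μ + β ^ 2 * σ ^ 2 / (2 * c) with hDdef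
  set K : ℝ := Real.exp D / (σ ^ c * s ^ c * σ ^ 6) with hKdef
  -- Step 1: change of variables x = exp y
  have h1 : ∫ x in Ioi (0:ℝ), scoreU2 μ σ x ^ 2 * lognormalPdf μ σ x ^ (1 + β)
      = ∫ y : ℝ, |Real.exp y| • (scoreU2 μ σ (Real.exp y) ^ 2
          * lognormalPdf μ σ (Real.exp y) ^ (1 + β)) := by
    rw [← Real.range_exp, ← image_univ,
      integral_image_eq_integral_abs_deriv_smul MeasurableSet.univ
        (fun x _ => (Real.hasDerivAt_exp x).hasDerivWithinAt) Real.exp_injective.injOn,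
      setIntegral_univ]
  -- Step 2: pointwise simplification
  have h2 : ∀ y : ℝ, |Real.exp y| • (scoreU2 μ σ (Real.exp y) ^ 2
        * lognormalPdf μ σ (Real.exp y) ^ (1 + β))
      = K * (((y - μ) ^ 2 - σ ^ 2) ^ 2 * Real.exp (-a * (y - m) ^ 2)) := by
    intro y
    have hx : 0 < Real.exp y := Real.exp_pos y
    rw [smul_eq_mul, abs_of_pos hx]
    unfold scoreU2 lognormalPdf
    rw [if_pos hx, Real.log_exp]
    have hbase : (1 / (Real.exp y * σ * s)) * Real.exp (-(y - μ) ^ 2 / (2 * σ ^ 2))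
        = Real.exp (-y + -(y - μ) ^ 2 / (2 * σ ^ 2)) / (σ * s) := by
      rw [Real.exp_add, Real.exp_neg]
      field_simp
    rw [hbase]
    have hpow : (Real.exp (-y + -(y - μ) ^ 2 / (2 * σ ^ 2)) / (σ * s)) ^ (1 + β)
        = Real.exp ((-y + -(y - μ) ^ 2 / (2 * σ ^ 2)) * c) / (σ ^ c * s ^ c) := by
      rw [Real.div_rpow (Real.exp_nonneg _) (by positivity),
        Real.mul_rpow hσ.le hs0.le,
        Real.rpow_def_of_pos (Real.exp_pos _), Real.log_exp, hcdef]
    rw [hpow]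
    have hEc : Real.exp ((-y + -(y - μ) ^ 2 / (2 * σ ^ 2)) * c)
        = Real.exp D * Real.exp (-a * (y - m) ^ 2) * (Real.exp y)⁻¹ := by
      rw [← Real.exp_neg, ← Real.exp_add, ← Real.exp_add]
      congr 1
      rw [hDdef, hadef, hmdef, hddef, hcdef]
      field_simp
      ring
    rw [hEc, hKdef]
    have hne : σ ^ c ≠ 0 := ne_of_gt (Real.rpow_pos_of_pos hσ _)
    have hne2 : s ^ c ≠ 0 := ne_of_gt (Real.rpow_pos_of_pos hs0 _)
    field_simp
  rw [h1]
  simp only [h2]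
  rw [integral_const_mul]
  -- Step 3: shift by m
  have h3 : ∫ y : ℝ, ((y - μ) ^ 2 - σ ^ 2) ^ 2 * Real.exp (-a * (y - m) ^ 2)
      = ∫ t : ℝ, (t ^ 4 + (4 * d) * t ^ 3 + (6 * d ^ 2 - 2 * σ ^ 2) * t ^ 2
          + (4 * d ^ 3 - 4 * d * σ ^ 2) * t + (d ^ 2 - σ ^ 2) ^ 2) * Real.exp (-a * t ^ 2) := by
    rw [← integral_add_right_eq_self (fun y => ((y - μ) ^ 2 - σ ^ 2) ^ 2
        * Real.exp (-a * (y - m) ^ 2)) m]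
    congr 1
    funext t
    show ((t + m - μ) ^ 2 - σ ^ 2) ^ 2 * Real.exp (-a * (t + m - m) ^ 2) = _
    rw [hmdef]
    have h : t + (μ + d) - (μ + d) = t := by ring
    rw [h]
    ring
  rw [h3, gauss_poly_integral ha]
  -- Step 4: final algebra
  have hsqrt : Real.sqrt (Real.pi / a) = s * σ / Real.sqrt c := by
    have h : Real.pi / a = (2 * Real.pi) * σ ^ 2 / c := by
      rw [hadef]; field_simp
    rw [h, Real.sqrt_div (by positivity) c, Real.sqrt_mul h2π.le, Real.sqrt_sq hσ.le]
  have hsc : s ^ c = s * (2 * Real.pi) ^ (β / 2) := by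
    have h1 : s ^ c = (2 * Real.pi) ^ ((1 / 2 : ℝ) * c) := by
      rw [Real.rpow_mul h2π.le, ← Real.sqrt_eq_rpow]
    rw [h1, show (1 / 2 : ℝ) * c = 1 / 2 + β / 2 by rw [hcdef]; ring,
      Real.rpow_add h2π, ← Real.sqrt_eq_rpow]
  have hc52 : c ^ ((5 : ℝ) / 2) = c ^ (2 : ℕ) * Real.sqrt c := by
    rw [show ((5 : ℝ) / 2) = ((2 : ℕ) : ℝ) + 1 / 2 by norm_num, Real.rpow_add hc,
      Real.rpow_natCast, ← Real.sqrt_eq_rpow]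
  have hR : Real.sqrt c ≠ 0 := ne_of_gt (Real.sqrt_pos.mpr hc)
  have hT : (2 * Real.pi) ^ (β / 2) ≠ 0 := ne_of_gt (Real.rpow_pos_of_pos h2π _)
  have hX : σ ^ c ≠ 0 := ne_of_gt (Real.rpow_pos_of_pos hσ _)
  have hs' : s ≠ 0 := ne_of_gt hs0
  rw [Lfactor, ← hcdef, ← hDdef, hsqrt, hKdef, hsc, hc52, hadef, hddef]
  have hE : Real.exp D ≠ 0 := Real.exp_ne_zero D
  rw [hcdef]
  field_simp
  ring
end

section
/- Let μ ∈ ℝ, σ > 0 and β > 0. Then the second component of the influence-function kernel of the minimum density power divergence estimator is bounded on the positive half-line: there exists M > 0 such that for all x > 0, |u₂(x) · f_{μ,σ}(x)^β| ≤ M. -/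
open Real MeasureTheory Set

lemma aux_y_exp (y : ℝ) (hy : 0 ≤ y) : y * Real.exp (-y) ≤ 1 := by
  have h := Real.add_one_le_exp y
  calc y * Real.exp (-y) ≤ Real.exp y * Real.exp (-y) :=
        mul_le_mul_of_nonneg_right (by linarith) (Real.exp_pos _).le
    _ = 1 := by rw [← Real.exp_add]; simp

lemma aux_quad_gauss (σ β t : ℝ) (hσ : 0 < σ) (hβ : 0 < β) :
    (t ^ 2 + σ ^ 2) * Real.exp (β * (-t - t ^ 2 / (2 * σ ^ 2))) ≤
      (4 * σ ^ 2 / β + 2 * σ ^ 4 + σ ^ 2) * Real.exp (β * σ ^ 2 / 2) := by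
  have hσ2 : (0:ℝ) < σ ^ 2 := by positivity
  set a : ℝ := β / (2 * σ ^ 2) with ha_def
  have ha : 0 < a := by positivity
  set s : ℝ := t + σ ^ 2 with hs_def
  have hid : β * (-t - t ^ 2 / (2 * σ ^ 2)) = β * σ ^ 2 / 2 + (-(a * s ^ 2)) := by
    rw [ha_def, hs_def]
    field_simp
    ring
  rw [hid, Real.exp_add]
  set E : ℝ := Real.exp (-(a * s ^ 2)) with hE_def
  have hE0 : 0 ≤ E := (Real.exp_pos _).le
  have h1 : t ^ 2 ≤ 2 * s ^ 2 + 2 * σ ^ 4 := by nlinarith [sq_nonneg (s + σ ^ 2)]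
  have h2 : a * s ^ 2 * E ≤ 1 := aux_y_exp _ (by positivity)
  have h3 : E ≤ 1 := Real.exp_le_one_iff.mpr (by nlinarith [sq_nonneg s])
  have h2' : s ^ 2 * E ≤ 2 * σ ^ 2 / β := by
    rw [le_div_iff₀ hβ]
    have : a * s ^ 2 * E * (2 * σ ^ 2) ≤ 2 * σ ^ 2 := by nlinarith
    calc s ^ 2 * E * β = a * s ^ 2 * E * (2 * σ ^ 2) := by
          rw [ha_def]; field_simp
      _ ≤ 2 * σ ^ 2 := this
  have key : (t ^ 2 + σ ^ 2) * E ≤ 4 * σ ^ 2 / β + 2 * σ ^ 4 + σ ^ 2 := by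
    have hh : (t ^ 2 + σ ^ 2) * E ≤ (2 * s ^ 2 + 2 * σ ^ 4 + σ ^ 2) * E :=
      mul_le_mul_of_nonneg_right (by nlinarith) hE0
    have h4 : (2 * σ ^ 4 + σ ^ 2) * E ≤ (2 * σ ^ 4 + σ ^ 2) * 1 :=
      mul_le_mul_of_nonneg_left h3 (by positivity)
    have h2'' : 2 * (s ^ 2 * E) ≤ 4 * σ ^ 2 / β := by
      rw [show (4:ℝ) * σ ^ 2 / β = 2 * (2 * σ ^ 2 / β) by ring]
      linarith
    clear_value s E a
    nlinarith [hh, h2'', h4]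
  calc (t ^ 2 + σ ^ 2) * (Real.exp (β * σ ^ 2 / 2) * E)
      = ((t ^ 2 + σ ^ 2) * E) * Real.exp (β * σ ^ 2 / 2) := by ring
    _ ≤ (4 * σ ^ 2 / β + 2 * σ ^ 4 + σ ^ 2) * Real.exp (β * σ ^ 2 / 2) :=
        mul_le_mul_of_nonneg_right key (Real.exp_pos _).le

/-- For `β > 0`, the second component of the influence-function kernel of the MDPD estimator,
`u₂(x) · f_{μ,σ}(x)^β`, is bounded on the positive half-line. -/
theorem if_kernel_second_bounded (μ σ β : ℝ) (hσ : 0 < σ) (hβ : 0 < β) :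
    ∃ M > 0, ∀ x > 0, |scoreU2 μ σ x * lognormalPdf μ σ x ^ β| ≤ M := by
  have hπ : (0:ℝ) < Real.sqrt (2 * Real.pi) := Real.sqrt_pos.mpr (by positivity)
  set K : ℝ := Real.log (σ * Real.sqrt (2 * Real.pi)) with hK_def
  set D : ℝ := Real.exp (β * (-μ - K)) with hD_def
  have hD : 0 < D := Real.exp_pos _
  refine ⟨((4 * σ ^ 2 / β + 2 * σ ^ 4 + σ ^ 2) * Real.exp (β * σ ^ 2 / 2)) / σ ^ 3 * D,
    by positivity, ?_⟩
  intro x hx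
  set t : ℝ := Real.log x - μ with ht_def
  -- rewrite the pdf as an exponential
  have hf : lognormalPdf μ σ x =
      Real.exp (-(Real.log x) - K - t ^ 2 / (2 * σ ^ 2)) := by
    rw [lognormalPdf, if_pos hx]
    rw [show -(Real.log x) - K - t ^ 2 / (2 * σ ^ 2)
        = (-(Real.log x)) + (-K) + (-(t ^ 2 / (2 * σ ^ 2))) by ring]
    rw [Real.exp_add, Real.exp_add, Real.exp_neg, Real.exp_neg, Real.exp_log hx,
      hK_def, Real.exp_log (by positivity : (0:ℝ) < σ * Real.sqrt (2 * Real.pi))]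
    rw [neg_div]
    field_simp
    ring
  have hfpow : lognormalPdf μ σ x ^ β =
      Real.exp (β * (-(Real.log x) - K - t ^ 2 / (2 * σ ^ 2))) := by
    rw [hf, ← Real.exp_mul, mul_comm]
  have hsplit : Real.exp (β * (-(Real.log x) - K - t ^ 2 / (2 * σ ^ 2)))
      = Real.exp (β * (-t - t ^ 2 / (2 * σ ^ 2))) * D := by
    rw [hD_def, ← Real.exp_add]
    congr 1
    have : Real.log x = t + μ := by rw [ht_def]; ring
    rw [this]; ring
  rw [hfpow, hsplit, scoreU2]
  have hE0 : 0 ≤ Real.exp (β * (-t - t ^ 2 / (2 * σ ^ 2))) := (Real.exp_pos _).le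
  have habs : |(t ^ 2 - σ ^ 2) / σ ^ 3| ≤ (t ^ 2 + σ ^ 2) / σ ^ 3 := by
    rw [abs_div, abs_of_pos (by positivity : (0:ℝ) < σ ^ 3)]
    apply div_le_div_of_nonneg_right ?_ (by positivity)
    · exact (abs_le.mpr ⟨by nlinarith [sq_nonneg t], by nlinarith [sq_nonneg σ]⟩)
  rw [abs_mul, abs_mul, abs_of_nonneg hE0, abs_of_pos hD, ← ht_def, ← mul_assoc]
  have step : |(t ^ 2 - σ ^ 2) / σ ^ 3| * Real.exp (β * (-t - t ^ 2 / (2 * σ ^ 2)))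
      ≤ ((4 * σ ^ 2 / β + 2 * σ ^ 4 + σ ^ 2) * Real.exp (β * σ ^ 2 / 2)) / σ ^ 3 := by
    calc |(t ^ 2 - σ ^ 2) / σ ^ 3| * Real.exp (β * (-t - t ^ 2 / (2 * σ ^ 2)))
        ≤ ((t ^ 2 + σ ^ 2) / σ ^ 3) * Real.exp (β * (-t - t ^ 2 / (2 * σ ^ 2))) :=
          mul_le_mul_of_nonneg_right habs hE0
      _ = ((t ^ 2 + σ ^ 2) * Real.exp (β * (-t - t ^ 2 / (2 * σ ^ 2)))) / σ ^ 3 := by ring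
      _ ≤ ((4 * σ ^ 2 / β + 2 * σ ^ 4 + σ ^ 2) * Real.exp (β * σ ^ 2 / 2)) / σ ^ 3 :=
          div_le_div_of_nonneg_right (aux_quad_gauss σ β t hσ hβ) (by positivity)
  exact mul_le_mul_of_nonneg_right step hD.le
end
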